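/- Let 𝒳 be a finite set with |𝒳| ≥ 2 and let p, q be pmfs on 𝒳. Set D = √(2 ln 2) · √(min(D(p‖q), D(q‖p))). If 0 < D ≤ 1/2, then |H(q) − H(p)| ≤ D · log₂(|𝒳| / D). (Appendix Lemma 9 of the paper.) -/

import Mathlib

open scoped ENNReal BigOperators

attribute [local instance] Classical.propDecidable

/-- Kullback–Leibler divergence (base 2) between two pmfs on a finite set,
valued in `[0, +∞]`. -/
noncomputable def klDiv {α : Type*} [Fintype α] (p q : α → ℝ) : ℝ≥0∞ :=
  if ∀ x, q x = 0 → p x = 0 then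
    ENNReal.ofReal (∑ x, p x * Real.logb 2 (p x / q x))
  else ⊤

/-- A probability mass function on a finite set. -/
def IsPMF {α : Type*} [Fintype α] (p : α → ℝ) : Prop :=
  (∀ x, 0 ≤ p x) ∧ ∑ x, p x = 1

/-- Base-2 Shannon entropy of a pmf. -/
noncomputable def shannonEntropy {α : Type*} [Fintype α] (p : α → ℝ) : ℝ :=
  -∑ x, p x * Real.logb 2 (p x)

section EntropyContinuityAux

open Real

/-- Padé bound: `log t ≥ 2(t-1)/(t+1)` for `t ≥ 1`, with reversed inequality on `(0,1]`. -/
private lemma pade_aux : ∀ x ∈ Set.Ioi (0:ℝ), HasDerivAt (fun t : ℝ => Real.log t - (2 - 4 / (t + 1)))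
    ((x-1)^2/(x*(x+1)^2)) x := by
  intro x hx
  have hx0 : (0:ℝ) < x := hx
  have h1 : x + 1 ≠ 0 := by positivity
  have hd : HasDerivAt (fun t : ℝ => 2 - 4 / (t + 1)) (4 / (x+1)^2) x := by
    have : HasDerivAt (fun t : ℝ => t + 1) 1 x := (hasDerivAt_id x).add_const 1
    have h2 := (hasDerivAt_const x (4:ℝ)).div this h1
    have h3 := h2.const_sub 2
    refine h3.congr_deriv ?_
    field_simp
    ring
  have hl : HasDerivAt Real.log x⁻¹ x := Real.hasDerivAt_log hx0.ne'
  have := hl.sub hd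
  refine this.congr_deriv ?_
  field_simp
  ring

lemma pade_ge {t : ℝ} (ht : 1 ≤ t) : 2 * (t - 1) / (t + 1) ≤ Real.log t := by
  have h0 : (0:ℝ) < t := lt_of_lt_of_le one_pos ht
  have hmono : MonotoneOn (fun t : ℝ => Real.log t - (2 - 4 / (t + 1))) (Set.Icc 1 t) := by
    apply monotoneOn_of_deriv_nonneg (convex_Icc 1 t)
    · intro x hx
      have hx0 : (0:ℝ) < x := lt_of_lt_of_le one_pos hx.1
      exact ((pade_aux x hx0).continuousAt).continuousWithinAt
    · intro x hx
      rw [interior_Icc] at hx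
      have hx0 : (0:ℝ) < x := lt_trans one_pos hx.1
      exact (pade_aux x hx0).differentiableAt.differentiableWithinAt
    · intro x hx
      rw [interior_Icc] at hx
      have hx0 : (0:ℝ) < x := lt_trans one_pos hx.1
      rw [(pade_aux x hx0).deriv]
      positivity
  have := hmono (Set.left_mem_Icc.2 ht) (Set.right_mem_Icc.2 ht) ht
  simp only [Real.log_one] at this
  have h1 : 2 * (t - 1) / (t + 1) = 2 - 4 / (t + 1) := by
    field_simp; ring
  rw [h1]
  nlinarith [this]

lemma pade_le {t : ℝ} (h0 : 0 < t) (ht : t ≤ 1) : Real.log t ≤ 2 * (t - 1) / (t + 1) := by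
  have hmono : MonotoneOn (fun t : ℝ => Real.log t - (2 - 4 / (t + 1))) (Set.Icc t 1) := by
    apply monotoneOn_of_deriv_nonneg (convex_Icc t 1)
    · intro x hx
      have hx0 : (0:ℝ) < x := lt_of_lt_of_le h0 hx.1
      exact ((pade_aux x hx0).continuousAt).continuousWithinAt
    · intro x hx
      rw [interior_Icc] at hx
      have hx0 : (0:ℝ) < x := lt_of_lt_of_le h0 hx.1.le
      exact (pade_aux x hx0).differentiableAt.differentiableWithinAt
    · intro x hx
      rw [interior_Icc] at hx
      have hx0 : (0:ℝ) < x := lt_of_lt_of_le h0 hx.1.le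
      rw [(pade_aux x hx0).deriv]
      positivity
  have := hmono (Set.left_mem_Icc.2 ht) (Set.right_mem_Icc.2 ht) ht
  simp only [Real.log_one] at this
  have h1 : 2 * (t - 1) / (t + 1) = 2 - 4 / (t + 1) := by
    field_simp; ring
  rw [h1]
  have ht1 : (0:ℝ) < t + 1 := by linarith
  nlinarith [this]

private lemma key_aux : ∀ x ∈ Set.Ioi (0:ℝ),
    HasDerivAt (fun t : ℝ => t * Real.log t - t + 1 - 3 * (t - 1) ^ 2 / (2 * (t + 2)))
      (Real.log x - 3 * (x - 1) * (x + 5) / (2 * (x + 2) ^ 2)) x := by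
  intro x hx
  have hx0 : (0:ℝ) < x := hx
  have h2 : (2:ℝ) * (x + 2) ≠ 0 := by positivity
  have hnum : HasDerivAt (fun t : ℝ => 3 * (t - 1) ^ 2) (3 * (2 * (x - 1))) x := by
    have : HasDerivAt (fun t : ℝ => (t - 1) ^ 2) (2 * (x - 1) ^ 1 * 1) x :=
      (((hasDerivAt_id x).sub_const 1).pow 2)
    simpa using this.const_mul 3
  have hden : HasDerivAt (fun t : ℝ => 2 * (t + 2)) 2 x := by
    simpa using ((hasDerivAt_id x).add_const 2).const_mul 2
  have hfrac := hnum.div hden h2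
  have hml : HasDerivAt (fun t : ℝ => t * Real.log t) (Real.log x + 1) x :=
    Real.hasDerivAt_mul_log hx0.ne'
  have := ((hml.sub (hasDerivAt_id x)).add_const 1).sub hfrac
  refine this.congr_deriv ?_
  field_simp
  ring

/-- Key pointwise inequality: `t log t - t + 1 ≥ 3(t-1)²/(2(t+2))` for `t ≥ 0`. -/
lemma key_pointwise {t : ℝ} (ht : 0 ≤ t) :
    3 * (t - 1) ^ 2 / (2 * (t + 2)) ≤ t * Real.log t - t + 1 := by
  rcases eq_or_lt_of_le ht with h | h
  · rw [← h]; norm_num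
  set f := fun t : ℝ => t * Real.log t - t + 1 - 3 * (t - 1) ^ 2 / (2 * (t + 2)) with hf
  have hf1 : f 1 = 0 := by simp [hf]
  have key : 0 ≤ f t := by
    rcases le_or_gt 1 t with h1 | h1
    · have hmono : MonotoneOn f (Set.Icc 1 t) := by
        apply monotoneOn_of_deriv_nonneg (convex_Icc 1 t)
        · intro x hx
          exact ((key_aux x (lt_of_lt_of_le one_pos hx.1)).continuousAt).continuousWithinAt
        · intro x hx
          rw [interior_Icc] at hx
          exact (key_aux x (lt_trans one_pos hx.1)).differentiableAt.differentiableWithinAt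
        · intro x hx
          rw [interior_Icc] at hx
          have hx1 : (1:ℝ) ≤ x := hx.1.le
          have hx0 : (0:ℝ) < x := lt_of_lt_of_le one_pos hx1
          rw [(key_aux x hx0).deriv]
          have hp := pade_ge hx1
          have e1 : (0:ℝ) < x + 1 := by linarith
          have e2 : (0:ℝ) < x + 2 := by linarith
          have : 3 * (x - 1) * (x + 5) / (2 * (x + 2) ^ 2) ≤ 2 * (x - 1) / (x + 1) := by
            rw [div_le_div_iff₀ (by positivity) (by positivity)]
            nlinarith [sq_nonneg (x-1), sq_nonneg x]
          linarith
      have := hmono (Set.left_mem_Icc.2 h1) (Set.right_mem_Icc.2 h1) h1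
      rw [hf1] at this; exact this
    · have hmono : AntitoneOn f (Set.Icc t 1) := by
        apply antitoneOn_of_deriv_nonpos (convex_Icc t 1)
        · intro x hx
          exact ((key_aux x (lt_of_lt_of_le h hx.1)).continuousAt).continuousWithinAt
        · intro x hx
          rw [interior_Icc] at hx
          exact (key_aux x (lt_of_lt_of_le h hx.1.le)).differentiableAt.differentiableWithinAt
        · intro x hx
          rw [interior_Icc] at hx
          have hx0 : (0:ℝ) < x := lt_of_lt_of_le h hx.1.le
          have hx1 : x ≤ 1 := hx.2.le
          rw [(key_aux x hx0).deriv]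
          have hp := pade_le hx0 hx1
          have e1 : (0:ℝ) < x + 1 := by linarith
          have e2 : (0:ℝ) < x + 2 := by linarith
          have : 2 * (x - 1) / (x + 1) ≤ 3 * (x - 1) * (x + 5) / (2 * (x + 2) ^ 2) := by
            rw [div_le_div_iff₀ (by positivity) (by positivity)]
            nlinarith [sq_nonneg (x-1), sq_nonneg x]
          linarith
      have := hmono (Set.left_mem_Icc.2 h1.le) (Set.right_mem_Icc.2 h1.le) h1.le
      rw [hf1] at this; exact this
  have hft : 0 ≤ t * Real.log t - t + 1 - 3 * (t - 1) ^ 2 / (2 * (t + 2)) := key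
  linarith

lemma pinsker_pointwise {a b : ℝ} (ha : 0 ≤ a) (hb : 0 ≤ b) (hab : b = 0 → a = 0) :
    3 * (a - b) ^ 2 / (2 * (a + 2 * b)) ≤ a * Real.log (a / b) - a + b := by
  rcases eq_or_lt_of_le hb with h0 | h0
  · have ha0 : a = 0 := hab h0.symm
    simp [ha0, ← h0]
  · have key := key_pointwise (div_nonneg ha h0.le)
    have hbne : b ≠ 0 := h0.ne'
    have hne : a + 2 * b ≠ 0 := by positivity
    have e1 : a / b * Real.log (a / b) - a / b + 1
        = (a * Real.log (a / b) - a + b) / b := by field_simp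
    have e2 : 3 * (a / b - 1) ^ 2 / (2 * (a / b + 2))
        = (3 * (a - b) ^ 2 / (2 * (a + 2 * b))) / b := by
      rw [div_div]
      rw [div_eq_div_iff (by positivity) (by positivity)]
      field_simp
    rw [e1, e2] at key
    exact (div_le_div_iff_of_pos_right h0).1 key

lemma pinsker_sum {α : Type*} [Fintype α] {p q : α → ℝ}
    (hp0 : ∀ x, 0 ≤ p x) (hp1 : ∑ x, p x = 1)
    (hq0 : ∀ x, 0 ≤ q x) (hq1 : ∑ x, q x = 1)
    (habs : ∀ x, q x = 0 → p x = 0) :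
    (∑ x, |p x - q x|) ^ 2 ≤ 2 * ∑ x, p x * Real.log (p x / q x) := by
  classical
  set s : Finset α := Finset.univ.filter (fun x => 0 < p x + 2 * q x) with hs
  have hzero : ∀ x ∈ (Finset.univ : Finset α), x ∉ s → |p x - q x| = 0 := by
    intro x _ hx
    simp only [hs, Finset.mem_filter, Finset.mem_univ, true_and, not_lt] at hx
    have h1 : p x = 0 := le_antisymm (by linarith [hq0 x]) (hp0 x)
    have h2 : q x = 0 := le_antisymm (by linarith [hp0 x]) (hq0 x)
    simp [h1, h2]
  have hTs : ∑ x, |p x - q x| = ∑ x ∈ s, |p x - q x| :=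
    (Finset.sum_subset (Finset.subset_univ s) hzero).symm
  by_cases hse : s = ∅
  · rw [hTs, hse]
    simp only [Finset.sum_empty]
    norm_num
    -- need 0 ≤ ∑ p log (p/q)
    apply Finset.sum_nonneg
    intro x _
    have hx : x ∉ s := by simp [hse]
    simp only [hs, Finset.mem_filter, Finset.mem_univ, true_and, not_lt] at hx
    have h1 : p x = 0 := le_antisymm (by linarith [hq0 x, hp0 x]) (hp0 x)
    simp [h1]
  · -- Titu / Cauchy-Schwarz
    have hspos : ∀ x ∈ s, 0 < (p x + 2 * q x) / 3 := by
      intro x hx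
      simp only [hs, Finset.mem_filter] at hx
      linarith [hx.2]
    have titu := Finset.sq_sum_div_le_sum_sq_div s (fun x => |p x - q x|) hspos
    have hwsum : ∑ x ∈ s, (p x + 2 * q x) / 3 ≤ 1 := by
      have : ∑ x ∈ s, (p x + 2 * q x) / 3 ≤ ∑ x, (p x + 2 * q x) / 3 := by
        apply Finset.sum_le_sum_of_subset_of_nonneg (Finset.subset_univ s)
        intro x _ _
        have := hp0 x; have := hq0 x; linarith
      have h2 : ∑ x : α, (p x + 2 * q x) / 3 = 1 := by
        rw [← Finset.sum_div, Finset.sum_add_distrib, ← Finset.mul_sum, hp1, hq1]; norm_num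
      linarith
    have hwpos : 0 < ∑ x ∈ s, (p x + 2 * q x) / 3 := by
      obtain ⟨x, hx⟩ := Finset.nonempty_iff_ne_empty.2 hse
      exact Finset.sum_pos' (fun y hy => (hspos y hy).le) ⟨x, hx, hspos x hx⟩
    have step1 : (∑ x ∈ s, |p x - q x|) ^ 2 ≤
        (∑ x ∈ s, |p x - q x|) ^ 2 / ∑ x ∈ s, (p x + 2 * q x) / 3 := by
      rw [le_div_iff₀ hwpos]
      nlinarith [sq_nonneg (∑ x ∈ s, |p x - q x|)]
    have step2 : ∀ x ∈ s, |p x - q x| ^ 2 / ((p x + 2 * q x) / 3) ≤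
        2 * (p x * Real.log (p x / q x) - p x + q x) := by
      intro x hx
      have hpt := pinsker_pointwise (hp0 x) (hq0 x) (habs x)
      have hposx : 0 < p x + 2 * q x := by
        simp only [hs, Finset.mem_filter] at hx; exact hx.2
      have : |p x - q x| ^ 2 / ((p x + 2 * q x) / 3) =
          2 * (3 * (p x - q x) ^ 2 / (2 * (p x + 2 * q x))) := by
        rw [sq_abs]
        field_simp
      rw [this]
      linarith [hpt]
    have step3 : ∑ x ∈ s, (2 * (p x * Real.log (p x / q x) - p x + q x)) ≤
        ∑ x, (2 * (p x * Real.log (p x / q x) - p x + q x)) := by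
      apply Finset.sum_le_sum_of_subset_of_nonneg (Finset.subset_univ s)
      intro x _ _
      have hpt := pinsker_pointwise (hp0 x) (hq0 x) (habs x)
      have hnn : 0 ≤ 3 * (p x - q x) ^ 2 / (2 * (p x + 2 * q x)) := by
        have := hp0 x; have := hq0 x; positivity
      linarith
    have step4 : ∑ x, (2 * (p x * Real.log (p x / q x) - p x + q x)) =
        2 * ∑ x, p x * Real.log (p x / q x) := by
      simp only [mul_sub, mul_add]
      rw [Finset.sum_add_distrib, Finset.sum_sub_distrib, ← Finset.mul_sum, ← Finset.mul_sum,
        ← Finset.mul_sum, hp1, hq1]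
      ring
    calc (∑ x, |p x - q x|) ^ 2 = (∑ x ∈ s, |p x - q x|) ^ 2 := by rw [hTs]
      _ ≤ (∑ x ∈ s, |p x - q x|) ^ 2 / ∑ x ∈ s, (p x + 2 * q x) / 3 := step1
      _ ≤ ∑ x ∈ s, |p x - q x| ^ 2 / ((p x + 2 * q x) / 3) := titu
      _ ≤ ∑ x ∈ s, (2 * (p x * Real.log (p x / q x) - p x + q x)) := Finset.sum_le_sum step2
      _ ≤ ∑ x, (2 * (p x * Real.log (p x / q x) - p x + q x)) := step3
      _ = 2 * ∑ x, p x * Real.log (p x / q x) := step4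

lemma exp_neg_one_le_half : Real.exp (-1) ≤ 1/2 := by
  have h2 : (2:ℝ) ≤ Real.exp 1 := by linarith [Real.add_one_le_exp 1]
  rw [Real.exp_neg]
  calc (Real.exp 1)⁻¹ ≤ (2:ℝ)⁻¹ := by
        apply inv_anti₀ (by norm_num) h2
    _ = 1/2 := by norm_num

/-- `negMulLog (1-t) ≤ negMulLog t` for `0 < t ≤ 1/2`. -/
lemma psi_lemma {t : ℝ} (h0 : 0 < t) (h2 : t ≤ 1/2) :
    Real.negMulLog (1 - t) ≤ Real.negMulLog t := by
  have h1t : 0 < 1 - t := by linarith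
  rcases le_or_gt t (Real.exp (-1)) with hc | hc
  · have e1 : Real.negMulLog (1 - t) ≤ t := by
      have hlog : Real.log (1 - t)⁻¹ ≤ (1 - t)⁻¹ - 1 := Real.log_le_sub_one_of_pos (by positivity)
      rw [Real.log_inv] at hlog
      have hinv : (1 - t)⁻¹ - 1 = t / (1 - t) := by field_simp; ring
      rw [hinv] at hlog
      have hrw : Real.negMulLog (1 - t) = (1 - t) * (-Real.log (1 - t)) := by
        unfold Real.negMulLog; ring
      rw [hrw]
      calc (1 - t) * (-Real.log (1 - t)) ≤ (1 - t) * (t / (1 - t)) :=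
            mul_le_mul_of_nonneg_left (by linarith) h1t.le
        _ = t := by field_simp
    have e2 : t ≤ Real.negMulLog t := by
      have hlog : Real.log t ≤ -1 := by
        calc Real.log t ≤ Real.log (Real.exp (-1)) := Real.log_le_log h0 hc
          _ = -1 := Real.log_exp _
      have hrw : Real.negMulLog t = t * (-Real.log t) := by unfold Real.negMulLog; ring
      rw [hrw]
      nlinarith
    linarith
  · have hkey : ∀ x ∈ Set.Ioo (Real.exp (-1)) (1/2 : ℝ),
        HasDerivAt (fun u : ℝ => Real.negMulLog u - Real.negMulLog (1 - u))
          (-(Real.log x + Real.log (1 - x)) - 2) x := by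
      intro x hx
      have hx0 : (0:ℝ) < x := lt_trans (Real.exp_pos _) hx.1
      have hx1 : (0:ℝ) < 1 - x := by linarith [hx.2]
      have d1 : HasDerivAt Real.negMulLog (-Real.log x - 1) x :=
        Real.hasDerivAt_negMulLog hx0.ne'
      have d2 : HasDerivAt (fun u : ℝ => Real.negMulLog (1 - u))
          ((-Real.log (1 - x) - 1) * (-1)) x := by
        have hin : HasDerivAt (fun u : ℝ => 1 - u) (-1) x := by
          simpa using (hasDerivAt_id x).const_sub 1
        exact (Real.hasDerivAt_negMulLog hx1.ne').comp x hin
      have hd := d1.sub d2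
      refine hd.congr_deriv ?_
      ring
    have hanti : AntitoneOn (fun u : ℝ => Real.negMulLog u - Real.negMulLog (1 - u))
        (Set.Icc (Real.exp (-1)) (1/2 : ℝ)) := by
      apply antitoneOn_of_deriv_nonpos (convex_Icc _ _)
      · apply Continuous.continuousOn
        exact Real.continuous_negMulLog.sub (Real.continuous_negMulLog.comp (by continuity))
      · intro x hx
        rw [interior_Icc] at hx
        exact (hkey x hx).differentiableAt.differentiableWithinAt
      · intro x hx
        rw [interior_Icc] at hx
        rw [(hkey x hx).deriv]
        have hx0 : Real.exp (-1) < x := hx.1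
        have hx1 : (1:ℝ)/2 < 1 - x := by linarith [hx.2]
        have hxpos0 : (0:ℝ) ≤ x := (lt_trans (Real.exp_pos _) hx0).le
        have hlb : Real.exp (-1) * (1/2) ≤ x * (1 - x) := by
          apply mul_le_mul hx0.le hx1.le (by norm_num) hxpos0
        have hee : Real.exp (-2) ≤ x * (1 - x) := by
          have h1 : Real.exp (-2) ≤ Real.exp (-1) * (1/2) := by
            rw [show (-2:ℝ) = -1 + -1 by norm_num, Real.exp_add]
            nlinarith [Real.exp_pos (-1), exp_neg_one_le_half]
          linarith
        have hxpos : (0:ℝ) < x := lt_trans (Real.exp_pos _) hx0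
        have h1x : (0:ℝ) < 1 - x := by linarith
        have hlog2 : -2 ≤ Real.log x + Real.log (1 - x) := by
          rw [← Real.log_mul hxpos.ne' h1x.ne']
          calc (-2:ℝ) = Real.log (Real.exp (-2)) := (Real.log_exp _).symm
            _ ≤ Real.log (x * (1 - x)) := Real.log_le_log (Real.exp_pos _) hee
        linarith
    have hmem1 : t ∈ Set.Icc (Real.exp (-1)) (1/2 : ℝ) := ⟨hc.le, h2⟩
    have hmem2 : (1/2 : ℝ) ∈ Set.Icc (Real.exp (-1)) (1/2 : ℝ) :=
      ⟨exp_neg_one_le_half, le_refl _⟩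
    have := hanti hmem1 hmem2 h2
    simp only at this
    have hhalf : (1:ℝ) - 1/2 = 1/2 := by norm_num
    rw [hhalf, sub_self] at this
    linarith

/-- Subadditivity of negMulLog: `g(x+t) ≤ g x + g t` for `x, t ≥ 0`. -/
lemma negMulLog_add_le {x t : ℝ} (hx : 0 ≤ x) (ht : 0 ≤ t) :
    Real.negMulLog (x + t) ≤ Real.negMulLog x + Real.negMulLog t := by
  rcases eq_or_lt_of_le hx with h | h
  · simp [← h]
  rcases eq_or_lt_of_le ht with h' | h'
  · simp [← h']
  have hxt : 0 < x + t := by linarith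
  have e : Real.negMulLog x + Real.negMulLog t - Real.negMulLog (x + t)
      = x * (Real.log (x + t) - Real.log x) + t * (Real.log (x + t) - Real.log t) := by
    unfold Real.negMulLog; ring
  have l1 : Real.log x ≤ Real.log (x + t) := Real.log_le_log h (by linarith)
  have l2 : Real.log t ≤ Real.log (x + t) := Real.log_le_log h' (by linarith)
  nlinarith [mul_nonneg hx (sub_nonneg.2 l1), mul_nonneg ht (sub_nonneg.2 l2)]

/-- Pointwise Fannes: `|g x - g y| ≤ g |x - y|` for `x, y ∈ [0,1]`, `|x-y| ≤ 1/2`. -/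
lemma negMulLog_abs_sub {x y : ℝ} (hx0 : 0 ≤ x) (hx1 : x ≤ 1) (hy0 : 0 ≤ y) (hy1 : y ≤ 1)
    (hd : |x - y| ≤ 1/2) : |Real.negMulLog x - Real.negMulLog y| ≤ Real.negMulLog |x - y| := by
  -- WLOG x ≤ y
  wlog hxy : x ≤ y generalizing x y
  · have := this hy0 hy1 hx0 hx1 (by rwa [abs_sub_comm]) (le_of_not_ge hxy)
    rwa [abs_sub_comm (Real.negMulLog y), abs_sub_comm y x] at this
  set t := y - x with htdef
  have ht0 : 0 ≤ t := by simp [htdef]; linarith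
  have habs : |x - y| = t := by rw [abs_sub_comm, abs_of_nonneg ht0]
  rw [habs]
  rcases eq_or_lt_of_le ht0 with h | h
  · have hxy' : x = y := by
      have : y - x = 0 := by rw [htdef] at h; linarith
      linarith
    rw [← h, Real.negMulLog_zero, hxy', sub_self, abs_zero]
  have ht2 : t ≤ 1/2 := by rw [habs] at hd; exact hd
  have hyxt : y = x + t := by simp [htdef]
  rw [abs_le]
  constructor
  · -- -(g t) ≤ g x - g y, i.e. g y ≤ g x + g t : subadditivity
    have := negMulLog_add_le hx0 ht0
    rw [← hyxt] at this
    linarith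
  · -- g x - g y ≤ g t : the monotone argument
    rcases eq_or_lt_of_le hx0 with hx | hx
    · have h1 : 0 ≤ Real.negMulLog t := Real.negMulLog_nonneg ht0 (by linarith)
      have h2 : 0 ≤ Real.negMulLog y := Real.negMulLog_nonneg hy0 hy1
      rw [← hx, Real.negMulLog_zero]
      linarith
    · have hx1t : x ≤ 1 - t := by rw [hyxt] at hy1; linarith
      have hkey : ∀ u ∈ Set.Ioo x (1 - t),
          HasDerivAt (fun u : ℝ => Real.negMulLog (u + t) - Real.negMulLog u)
            (Real.log u - Real.log (u + t)) u := by
        intro u hu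
        have hu0 : 0 < u := lt_trans hx hu.1
        have hut : 0 < u + t := by linarith
        have d1 : HasDerivAt (fun u : ℝ => Real.negMulLog (u + t))
            ((-Real.log (u + t) - 1) * 1) u :=
          (Real.hasDerivAt_negMulLog hut.ne').comp (h₂ := Real.negMulLog) u ((hasDerivAt_id u).add_const t)
        have d2 : HasDerivAt Real.negMulLog (-Real.log u - 1) u :=
          Real.hasDerivAt_negMulLog hu0.ne'
        have hd12 := d1.sub d2
        refine hd12.congr_deriv ?_
        ring
      have hanti : AntitoneOn (fun u : ℝ => Real.negMulLog (u + t) - Real.negMulLog u)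
          (Set.Icc x (1 - t)) := by
        apply antitoneOn_of_deriv_nonpos (convex_Icc _ _)
        · apply Continuous.continuousOn
          exact (Real.continuous_negMulLog.comp (continuous_id.add continuous_const)).sub
            Real.continuous_negMulLog
        · intro u hu
          rw [interior_Icc] at hu
          exact (hkey u hu).differentiableAt.differentiableWithinAt
        · intro u hu
          rw [interior_Icc] at hu
          rw [(hkey u hu).deriv]
          have hu0 : 0 < u := lt_trans hx hu.1
          have : Real.log u ≤ Real.log (u + t) := Real.log_le_log hu0 (by linarith)
          linarith
      have hm1 : x ∈ Set.Icc x (1 - t) := ⟨le_refl _, hx1t⟩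
      have hm2 : (1 - t) ∈ Set.Icc x (1 - t) := ⟨hx1t, le_refl _⟩
      have hmono := hanti hm1 hm2 hx1t
      simp only at hmono
      have hsimp : (1 : ℝ) - t + t = 1 := by ring
      rw [hsimp, Real.negMulLog_one] at hmono
      have hpsi := psi_lemma h ht2
      rw [← hyxt] at hmono
      linarith

/-- maximum-entropy style bound: `∑ g(t i) ≤ T log (d / T)` for nonnegative `t` summing to `T > 0`,
`d` the cardinality. -/
lemma sum_negMulLog_le {α : Type*} [Fintype α] {t : α → ℝ} (ht : ∀ x, 0 ≤ t x)
    {T : ℝ} (hT : T = ∑ x, t x) (hTpos : 0 < T) :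
    ∑ x, Real.negMulLog (t x) ≤ T * Real.log ((Fintype.card α : ℝ) / T) := by
  have hcard : 0 < (Fintype.card α : ℝ) := by
    have : Finset.univ.Nonempty (α := α) := by
      by_contra hne
      rw [Finset.not_nonempty_iff_eq_empty] at hne
      rw [hne] at hT; simp at hT; rw [hT] at hTpos; exact lt_irrefl 0 hTpos
    exact_mod_cast Fintype.card_pos_iff.2 ⟨this.choose⟩
  set d : ℝ := (Fintype.card α : ℝ) with hd
  have pointwise : ∀ x, Real.negMulLog (t x) ≤ t x * (Real.log d - Real.log T) + (T / d - t x) := by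
    intro x
    rcases eq_or_lt_of_le (ht x) with h | h
    · rw [← h, Real.negMulLog_zero]
      have : 0 ≤ T / d := by positivity
      simpa using this
    · have hlog : Real.log (T / (d * t x)) ≤ T / (d * t x) - 1 :=
        Real.log_le_sub_one_of_pos (by positivity)
      have hexp : Real.log (T / (d * t x)) = Real.log T - Real.log d - Real.log (t x) := by
        rw [Real.log_div hTpos.ne' (by positivity), Real.log_mul (by positivity) h.ne']
        ring
      rw [hexp] at hlog
      have hmul := mul_le_mul_of_nonneg_left hlog (ht x)
      have e1 : t x * (T / (d * t x) - 1) = T / d - t x := by field_simp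
      rw [e1] at hmul
      unfold Real.negMulLog
      nlinarith [hmul]
  calc ∑ x, Real.negMulLog (t x)
      ≤ ∑ x, (t x * (Real.log d - Real.log T) + (T / d - t x)) := Finset.sum_le_sum
        (fun x _ => pointwise x)
    _ = (∑ x, t x) * (Real.log d - Real.log T) + ((Fintype.card α : ℝ) * (T / d) - ∑ x, t x) := by
        rw [Finset.sum_add_distrib, ← Finset.sum_mul, Finset.sum_sub_distrib]
        simp [Finset.sum_const, Finset.card_univ]
    _ = T * (Real.log d - Real.log T) := by
        rw [← hT]
        have : d * (T / d) = T := by field_simp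
        rw [hd] at this ⊢
        rw [this]
        ring
    _ = T * Real.log (d / T) := by rw [Real.log_div hcard.ne' hTpos.ne']

/-- Fannes inequality (natural log form). -/
lemma fannes {α : Type*} [Fintype α] {p q : α → ℝ}
    (hp0 : ∀ x, 0 ≤ p x) (hp1 : ∑ x, p x = 1)
    (hq0 : ∀ x, 0 ≤ q x) (hq1 : ∑ x, q x = 1)
    {T : ℝ} (hT : T = ∑ x, |p x - q x|) (hTpos : 0 < T) (hThalf : T ≤ 1/2) :
    |(∑ x, Real.negMulLog (q x)) - ∑ x, Real.negMulLog (p x)| ≤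
      T * Real.log ((Fintype.card α : ℝ) / T) := by
  have hple : ∀ x, p x ≤ 1 := by
    intro x
    rw [← hp1]
    exact Finset.single_le_sum (fun y _ => hp0 y) (Finset.mem_univ x)
  have hqle : ∀ x, q x ≤ 1 := by
    intro x
    rw [← hq1]
    exact Finset.single_le_sum (fun y _ => hq0 y) (Finset.mem_univ x)
  have habs_le : ∀ x, |p x - q x| ≤ 1/2 := by
    intro x
    calc |p x - q x| ≤ ∑ y, |p y - q y| :=
          Finset.single_le_sum (f := fun y => |p y - q y|) (fun y _ => abs_nonneg _)
            (Finset.mem_univ x)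
      _ = T := hT.symm
      _ ≤ 1/2 := hThalf
  calc |(∑ x, Real.negMulLog (q x)) - ∑ x, Real.negMulLog (p x)|
      = |∑ x, (Real.negMulLog (q x) - Real.negMulLog (p x))| := by
        rw [Finset.sum_sub_distrib]
    _ ≤ ∑ x, |Real.negMulLog (q x) - Real.negMulLog (p x)| :=
        Finset.abs_sum_le_sum_abs _ _
    _ ≤ ∑ x, Real.negMulLog |p x - q x| := by
        apply Finset.sum_le_sum
        intro x _
        have := negMulLog_abs_sub (hq0 x) (hqle x) (hp0 x) (hple x)
          (by rw [abs_sub_comm]; exact habs_le x)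
        rwa [abs_sub_comm (q x)] at this
    _ ≤ T * Real.log ((Fintype.card α : ℝ) / T) :=
        sum_negMulLog_le (fun x => abs_nonneg _) hT hTpos

/-- Monotonicity of `x ↦ x log (d/x)` on `(0, 1/2]` for `d ≥ 2`. -/
lemma mono_xlog {a b d : ℝ} (ha : 0 < a) (hab : a ≤ b) (hb : b ≤ 1/2) (hd : 2 ≤ d) :
    a * Real.log (d / a) ≤ b * Real.log (d / b) := by
  have hb0 : 0 < b := lt_of_lt_of_le ha hab
  have hd0 : (0:ℝ) < d := by linarith
  rw [Real.log_div hd0.ne' ha.ne', Real.log_div hd0.ne' hb0.ne']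
  -- suffices: b log b - a log a ≤ (b - a) * log d
  have h1 : Real.log (b / a) ≤ b / a - 1 := Real.log_le_sub_one_of_pos (by positivity)
  have h2 : a * Real.log (b / a) ≤ b - a := by
    have := mul_le_mul_of_nonneg_left h1 ha.le
    have e : a * (b / a - 1) = b - a := by field_simp
    rw [e] at this; exact this
  have h3 : Real.log (b / a) = Real.log b - Real.log a := Real.log_div hb0.ne' ha.ne'
  have h4 : Real.log b ≤ Real.log (1/2) := Real.log_le_log hb0 hb
  have h5 : Real.log (1/2) = -Real.log 2 := by
    rw [one_div, Real.log_inv]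
  have h6 : Real.log 2 ≤ Real.log d := Real.log_le_log (by norm_num) hd
  have h7 : (1:ℝ)/2 ≤ Real.log 2 := by linarith [Real.log_two_gt_d9]
  -- b log b - a log a = a * log(b/a) + (b - a) log b ≤ (b-a) + (b-a)(log(1/2)) ≤ (b-a) log d
  nlinarith [mul_le_mul_of_nonneg_left h4 (sub_nonneg.2 hab), sub_nonneg.2 hab,
    mul_le_mul_of_nonneg_left h6 (sub_nonneg.2 hab)]

-- helper: entropy in nats
lemma shannonEntropy_eq {α : Type*} [Fintype α] (p : α → ℝ) :
    shannonEntropy p = (∑ x, Real.negMulLog (p x)) / Real.log 2 := by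
  have hlog2 : Real.log 2 ≠ 0 := ne_of_gt (Real.log_pos (by norm_num))
  unfold shannonEntropy
  rw [eq_div_iff hlog2, neg_mul, Finset.sum_mul, neg_eq_iff_eq_neg, ← Finset.sum_neg_distrib]
  apply Finset.sum_congr rfl
  intro x _
  unfold Real.negMulLog Real.logb
  field_simp


end EntropyContinuityAux

/-- Appendix Lemma 9: entropy continuity. With
`D = √(2 ln 2) · √(min(D(p‖q), D(q‖p)))` (in `[0,+∞]`), if `0 < D ≤ 1/2`
then `|H(q) − H(p)| ≤ D · log₂(|𝒳|/D)`. -/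
theorem entropy_diff_le {𝒳 : Type*} [Fintype 𝒳] (hcard : 2 ≤ Fintype.card 𝒳)
    (p q : 𝒳 → ℝ) (hp : IsPMF p) (hq : IsPMF q) (D : ℝ≥0∞)
    (hD : D = ENNReal.ofReal (Real.sqrt (2 * Real.log 2)) *
      (min (klDiv p q) (klDiv q p)) ^ (1 / 2 : ℝ))
    (hD0 : 0 < D) (hDhalf : D ≤ ENNReal.ofReal (1 / 2)) :
    |shannonEntropy q - shannonEntropy p| ≤
      D.toReal * Real.logb 2 ((Fintype.card 𝒳 : ℝ) / D.toReal) := by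
  obtain ⟨hp0, hp1⟩ := hp
  obtain ⟨hq0, hq1⟩ := hq
  have hlog2 : (0:ℝ) < Real.log 2 := Real.log_pos (by norm_num)
  have hs0 : (0:ℝ) < Real.sqrt (2 * Real.log 2) := Real.sqrt_pos.2 (by positivity)
  have hdR : (2:ℝ) ≤ (Fintype.card 𝒳 : ℝ) := by exact_mod_cast hcard
  have hDtop : D ≠ ⊤ := ne_top_of_le_ne_top ENNReal.ofReal_ne_top hDhalf
  set M := min (klDiv p q) (klDiv q p) with hM
  have hofReal_ne : ENNReal.ofReal (Real.sqrt (2 * Real.log 2)) ≠ 0 := by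
    rw [Ne, ENNReal.ofReal_eq_zero, not_le]; exact hs0
  have hMtop : M ≠ ⊤ := by
    intro h
    apply hDtop
    rw [hD, h, ENNReal.top_rpow_of_pos (by norm_num), ENNReal.mul_top hofReal_ne]
  -- D.toReal
  have hDr : D.toReal = Real.sqrt (2 * Real.log 2) * Real.sqrt M.toReal := by
    rw [hD, ENNReal.toReal_mul, ENNReal.toReal_ofReal hs0.le,
      ← ENNReal.toReal_rpow, Real.sqrt_eq_rpow, Real.sqrt_eq_rpow M.toReal]
  set Dr := D.toReal with hDrdef
  have hDrpos : 0 < Dr := ENNReal.toReal_pos hD0.ne' hDtop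
  have hDrhalf : Dr ≤ 1/2 := by
    rw [hDrdef]
    exact ENNReal.toReal_le_of_le_ofReal (by norm_num) hDhalf
  -- total variation
  set T := ∑ x, |p x - q x| with hT
  have hT0 : 0 ≤ T := Finset.sum_nonneg (fun x _ => abs_nonneg _)
  -- Pinsker: T ≤ Dr
  have hTDr : T ≤ Dr := by
    have key : T ^ 2 ≤ 2 * Real.log 2 * M.toReal := by
      rcases min_cases (klDiv p q) (klDiv q p) with ⟨hmin, _⟩ | ⟨hmin, _⟩
      · -- M = klDiv p q
        have hMeq : M = klDiv p q := hM.trans hmin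
        have hne : klDiv p q ≠ ⊤ := hMeq ▸ hMtop
        have hcond : ∀ x, q x = 0 → p x = 0 := by
          by_contra hc
          exact hne (by unfold klDiv; rw [if_neg hc])
        have hkl : klDiv p q = ENNReal.ofReal (∑ x, p x * Real.logb 2 (p x / q x)) := by
          unfold klDiv; rw [if_pos hcond]
        have hm : (∑ x, p x * Real.logb 2 (p x / q x)) ≤ M.toReal := by
          rw [hMeq, hkl, ENNReal.toReal_ofReal']
          exact le_max_left _ _
        have hsnat : ∑ x, p x * Real.log (p x / q x)
            = (∑ x, p x * Real.logb 2 (p x / q x)) * Real.log 2 := by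
          rw [Finset.sum_mul]
          apply Finset.sum_congr rfl
          intro x _
          rw [Real.logb]
          field_simp
        have hpins := pinsker_sum hp0 hp1 hq0 hq1 hcond
        calc T ^ 2 ≤ 2 * ∑ x, p x * Real.log (p x / q x) := hpins
          _ = 2 * Real.log 2 * (∑ x, p x * Real.logb 2 (p x / q x)) := by rw [hsnat]; ring
          _ ≤ 2 * Real.log 2 * M.toReal :=
              mul_le_mul_of_nonneg_left hm (by positivity)
      · -- M = klDiv q p
        have hMeq : M = klDiv q p := hM.trans hmin
        have hne : klDiv q p ≠ ⊤ := hMeq ▸ hMtop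
        have hcond : ∀ x, p x = 0 → q x = 0 := by
          by_contra hc
          exact hne (by unfold klDiv; rw [if_neg hc])
        have hkl : klDiv q p = ENNReal.ofReal (∑ x, q x * Real.logb 2 (q x / p x)) := by
          unfold klDiv; rw [if_pos hcond]
        have hm : (∑ x, q x * Real.logb 2 (q x / p x)) ≤ M.toReal := by
          rw [hMeq, hkl, ENNReal.toReal_ofReal']
          exact le_max_left _ _
        have hsnat : ∑ x, q x * Real.log (q x / p x)
            = (∑ x, q x * Real.logb 2 (q x / p x)) * Real.log 2 := by
          rw [Finset.sum_mul]
          apply Finset.sum_congr rfl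
          intro x _
          rw [Real.logb]
          field_simp
        have hpins := pinsker_sum hq0 hq1 hp0 hp1 hcond
        have hTsym : T = ∑ x, |q x - p x| := by
          rw [hT]
          exact Finset.sum_congr rfl (fun x _ => abs_sub_comm _ _)
        calc T ^ 2 = (∑ x, |q x - p x|) ^ 2 := by rw [← hTsym]
          _ ≤ 2 * ∑ x, q x * Real.log (q x / p x) := hpins
          _ = 2 * Real.log 2 * (∑ x, q x * Real.logb 2 (q x / p x)) := by rw [hsnat]; ring
          _ ≤ 2 * Real.log 2 * M.toReal :=
              mul_le_mul_of_nonneg_left hm (by positivity)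
    calc T = Real.sqrt (T ^ 2) := (Real.sqrt_sq hT0).symm
      _ ≤ Real.sqrt (2 * Real.log 2 * M.toReal) := Real.sqrt_le_sqrt key
      _ = Real.sqrt (2 * Real.log 2) * Real.sqrt M.toReal := Real.sqrt_mul (by positivity) _
      _ = Dr := hDr.symm
  -- final
  rcases eq_or_lt_of_le hT0 with hTz | hTpos
  · -- T = 0 : p = q
    have hpq : ∀ x, p x = q x := by
      intro x
      have hall := (Finset.sum_eq_zero_iff_of_nonneg (fun y (_ : y ∈ Finset.univ) => abs_nonneg (p y - q y))).1 hTz.symm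
      have := hall x (Finset.mem_univ x)
      rwa [abs_eq_zero, sub_eq_zero] at this
    have hent : shannonEntropy q = shannonEntropy p := by
      unfold shannonEntropy
      congr 1
      apply Finset.sum_congr rfl
      intro x _
      rw [hpq x]
    rw [hent, sub_self, abs_zero]
    apply mul_nonneg hDrpos.le
    apply Real.logb_nonneg (by norm_num)
    rw [le_div_iff₀ hDrpos]
    linarith
  · -- T > 0
    have hstep := fannes hp0 hp1 hq0 hq1 hT hTpos (le_trans hTDr hDrhalf)
    have hmono := mono_xlog hTpos hTDr hDrhalf hdR
    rw [shannonEntropy_eq, shannonEntropy_eq, div_sub_div_same, abs_div,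
      abs_of_pos hlog2]
    rw [div_le_iff₀ hlog2]
    have hlogb : Real.logb 2 ((Fintype.card 𝒳 : ℝ) / Dr) =
        Real.log ((Fintype.card 𝒳 : ℝ) / Dr) / Real.log 2 := rfl
    rw [hlogb]
    have : Dr * (Real.log ((Fintype.card 𝒳 : ℝ) / Dr) / Real.log 2) * Real.log 2
        = Dr * Real.log ((Fintype.card 𝒳 : ℝ) / Dr) := by
      field_simp
    rw [this]
    calc |(∑ x, Real.negMulLog (q x)) - ∑ x, Real.negMulLog (p x)|
        ≤ T * Real.log ((Fintype.card 𝒳 : ℝ) / T) := hstep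
      _ ≤ Dr * Real.log ((Fintype.card 𝒳 : ℝ) / Dr) := hmono
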